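/- Let f : ℝ³ → ℝ be continuously differentiable with f_v(t,u,v) ≠ 0 for all (t,u,v) ∈ ℝ³, where f_t, f_u, f_v denote the partial derivatives of f in its first, second and third arguments. Let A, B ∈ ℝ, not both zero, let C : ℝ → ℝ be continuous, and define g(t,u,v) = [A·u + (B − f_u(t,u,v))·f(t,u,v) − f_t(t,u,v) + C(t)] / f_v(t,u,v). If x, y : I → ℝ are differentiable on an open interval I and satisfy x'(t) = f(t,x(t),y(t)) and y'(t) = g(t,x(t),y(t)) for all t ∈ I, then x is twice differentiable on I and satisfies the linear nonhomogeneous equation x''(t) = A·x(t) + B·x'(t) + C(t) for all t ∈ I. -/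

import Mathlib

/-- Corollary 3 (quantitative core): with
`g = (A·u + (B − f_u)·f − f_t + C(t))/f_v`, the `x`-component of any flow of
`ẋ = f(t,x,y)`, `ẏ = g(t,x,y)` satisfies the linear nonhomogeneous equation
`ẍ = A·x + B·ẋ + C(t)`. -/
theorem linear_folding
    (f g : ℝ → ℝ → ℝ → ℝ) (A B : ℝ) (C : ℝ → ℝ)
    (hf : ContDiff ℝ 1 (fun p : ℝ × ℝ × ℝ => f p.1 p.2.1 p.2.2))
    (hfv : ∀ t u v, deriv (fun r => f t u r) v ≠ 0)
    (hAB : A ≠ 0 ∨ B ≠ 0)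
    (hC : Continuous C)
    (hgdef : ∀ t u v, g t u v =
      (A * u + (B - deriv (fun r => f t r v) u) * f t u v
        - deriv (fun r => f r u v) t + C t) / deriv (fun r => f t u r) v)
    (a b : ℝ) (x y : ℝ → ℝ)
    (hx : ∀ t ∈ Set.Ioo a b, HasDerivAt x (f t (x t) (y t)) t)
    (hy : ∀ t ∈ Set.Ioo a b, HasDerivAt y (g t (x t) (y t)) t) :
    ∀ t ∈ Set.Ioo a b,
      HasDerivAt (deriv x) (A * x t + B * deriv x t + C t) t := by
  set F : ℝ × ℝ × ℝ → ℝ := fun p => f p.1 p.2.1 p.2.2 with hF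
  have hFd : Differentiable ℝ F := hf.differentiable one_ne_zero
  intro t ht
  set p : ℝ × ℝ × ℝ := (t, x t, y t) with hp
  set L : (ℝ × ℝ × ℝ) →L[ℝ] ℝ := fderiv ℝ F p with hL
  have hLF : HasFDerivAt F L p := hFd.differentiableAt.hasFDerivAt
  -- partial derivatives as L applied to basis vectors
  have hpt : HasDerivAt (fun r => f r (x t) (y t)) (L (1, 0, 0)) t := by
    have hc : HasDerivAt (fun r : ℝ => (r, x t, y t)) ((1 : ℝ), (0 : ℝ), (0 : ℝ)) t :=
      HasDerivAt.prodMk (hasDerivAt_id t) (HasDerivAt.prodMk (hasDerivAt_const t (x t)) (hasDerivAt_const t (y t)))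
    simpa [hF, Function.comp_def] using hLF.comp_hasDerivAt t hc
  have hpu : HasDerivAt (fun r => f t r (y t)) (L (0, 1, 0)) (x t) := by
    have hc : HasDerivAt (fun r : ℝ => (t, r, y t)) ((0 : ℝ), (1 : ℝ), (0 : ℝ)) (x t) :=
      HasDerivAt.prodMk (hasDerivAt_const (x t) t) (HasDerivAt.prodMk (hasDerivAt_id (x t)) (hasDerivAt_const (x t) (y t)))
    simpa [hF, Function.comp_def] using hLF.comp_hasDerivAt (x t) hc
  have hpv : HasDerivAt (fun r => f t (x t) r) (L (0, 0, 1)) (y t) := by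
    have hc : HasDerivAt (fun r : ℝ => (t, x t, r)) ((0 : ℝ), (0 : ℝ), (1 : ℝ)) (y t) :=
      HasDerivAt.prodMk (hasDerivAt_const (y t) t) (HasDerivAt.prodMk (hasDerivAt_const (y t) (x t)) (hasDerivAt_id (y t)))
    simpa [hF, Function.comp_def] using hLF.comp_hasDerivAt (y t) hc
  have hdt : deriv (fun r => f r (x t) (y t)) t = L (1, 0, 0) := hpt.deriv
  have hdu : deriv (fun r => f t r (y t)) (x t) = L (0, 1, 0) := hpu.deriv
  have hdv : deriv (fun r => f t (x t) r) (y t) = L (0, 0, 1) := hpv.deriv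
  -- derivative of t ↦ f t (x t) (y t)
  have hγ : HasDerivAt (fun s : ℝ => (s, x s, y s))
      ((1 : ℝ), f t (x t) (y t), g t (x t) (y t)) t :=
    HasDerivAt.prodMk (hasDerivAt_id t) (HasDerivAt.prodMk (hx t ht) (hy t ht))
  have hcomp : HasDerivAt (fun s => f s (x s) (y s))
      (L (1, f t (x t) (y t), g t (x t) (y t))) t := by
    simpa [hF, Function.comp_def] using hLF.comp_hasDerivAt t hγ
  -- deriv x agrees with this function on the open interval
  have heq : deriv x =ᶠ[nhds t] (fun s => f s (x s) (y s)) := by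
    filter_upwards [isOpen_Ioo.mem_nhds ht] with s hs
    exact (hx s hs).deriv
  have hdx : deriv x t = f t (x t) (y t) := (hx t ht).deriv
  -- expand L by linearity
  have hlin : L (1, f t (x t) (y t), g t (x t) (y t))
      = L (1, 0, 0) + f t (x t) (y t) * L (0, 1, 0) + g t (x t) (y t) * L (0, 0, 1) := by
    have : ((1 : ℝ), f t (x t) (y t), g t (x t) (y t))
        = (1, (0 : ℝ), (0 : ℝ)) + f t (x t) (y t) • ((0 : ℝ), (1 : ℝ), (0 : ℝ))
          + g t (x t) (y t) • ((0 : ℝ), (0 : ℝ), (1 : ℝ)) := by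
      simp [Prod.ext_iff]
    rw [this]
    simp only [map_add, map_smul, smul_eq_mul]
  -- the key algebraic identity
  have hvne : L (0, 0, 1) ≠ 0 := by
    have := hfv t (x t) (y t); rwa [hdv] at this
  have hgval : g t (x t) (y t) * L (0, 0, 1)
      = A * x t + (B - L (0, 1, 0)) * f t (x t) (y t) - L (1, 0, 0) + C t := by
    rw [hgdef, hdt, hdu, hdv, div_mul_cancel₀ _ hvne]
  have hval : L (1, f t (x t) (y t), g t (x t) (y t))
      = A * x t + B * deriv x t + C t := by
    rw [hlin, hgval, hdx]; ring
  rw [hval] at hcomp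
  exact hcomp.congr_of_eventuallyEq heq
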